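/- Let X ∈ ℝ^{m×n} have rank r with singular values σ₁ ≥ … ≥ σ_r > 0, and let a₁ ≤ a₂ ≤ … ≤ a_p be nonnegative weights with p ≥ r. Then for all factorizations X = BCᵀ with B ∈ ℝ^{m×p}, C ∈ ℝ^{n×p}, the inequality Σᵢ aᵢ(‖Bᵢ‖² + ‖Cᵢ‖²)/2 ≥ Σᵢ₌₁^r aᵢσᵢ(X) holds, where Bᵢ, Cᵢ denote the i-th columns, and equality is attained by B = L√Σ, C = R√Σ (padded with zero columns), where X = LΣRᵀ is the compact SVD. That is, min over factorizations of Σᵢ aᵢ(‖Bᵢ‖²+‖Cᵢ‖²)/2 equals the weighted nuclear norm Σᵢ aᵢσᵢ(X). -/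

import Mathlib

open Matrix BigOperators

open Matrix BigOperators Finset

lemma sum_sq_mulVec {α β : Type*} [Fintype α] [Fintype β] [DecidableEq β]
    (U : Matrix α β ℝ) (hU : Uᵀ * U = 1) (z : β → ℝ) :
    ∑ x, ((U *ᵥ z) x)^2 = ∑ j, (z j)^2 := by
  have h1 : (U *ᵥ z) ⬝ᵥ (U *ᵥ z) = z ⬝ᵥ z := by
    rw [dotProduct_mulVec, ← vecMul_transpose, vecMul_vecMul, hU, vecMul_one]
  simpa [dotProduct, pow_two] using h1

lemma sum_sq_transpose_mulVec_le {α β : Type*} [Fintype α] [Fintype β] [DecidableEq β]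
    (U : Matrix α β ℝ) (hU : Uᵀ * U = 1) (b : α → ℝ) :
    ∑ j, ((Uᵀ *ᵥ b) j)^2 ≤ ∑ x, (b x)^2 := by
  set y := Uᵀ *ᵥ b with hy
  have hS : ∑ x, ((U *ᵥ y) x)^2 = ∑ j, (y j)^2 := sum_sq_mulVec U hU y
  have hdot : ∑ x, (U *ᵥ y) x * b x = ∑ j, (y j)^2 := by
    have : (U *ᵥ y) ⬝ᵥ b = y ⬝ᵥ (Uᵀ *ᵥ b) := by
      rw [dotProduct_mulVec, ← vecMul_transpose]
    simpa [dotProduct, hy, pow_two] using this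
  have cs := Finset.sum_mul_sq_le_sq_mul_sq Finset.univ (fun x => (U *ᵥ y) x) b
  rw [hdot, hS] at cs
  set Sy := ∑ j, (y j)^2 with hSy
  set Sb := ∑ x, (b x)^2 with hSb
  have hSy0 : 0 ≤ Sy := Finset.sum_nonneg fun _ _ => sq_nonneg _
  have hSb0 : 0 ≤ Sb := Finset.sum_nonneg fun _ _ => sq_nonneg _
  rcases eq_or_lt_of_le hSy0 with h | h
  · linarith
  · nlinarith

lemma sum_sq_row_le_one {α β : Type*} [Fintype α] [Fintype β] [DecidableEq α] [DecidableEq β]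
    (Q : Matrix α β ℝ) (hQ : Qᵀ * Q = 1) (i : α) : ∑ j, (Q i j)^2 ≤ 1 := by
  set P := Q * Qᵀ with hPdef
  have hP : P * P = P := by
    rw [hPdef, Matrix.mul_assoc, ← Matrix.mul_assoc Qᵀ Q Qᵀ, hQ, Matrix.one_mul]
  have hsymm : ∀ x y, P x y = P y x := by
    intro x y; simp [hPdef, Matrix.mul_apply, mul_comm]
  have h1 : P i i = ∑ l, (P i l)^2 := by
    conv_lhs => rw [← hP]
    rw [Matrix.mul_apply]
    exact Finset.sum_congr rfl fun l _ => by rw [hsymm l i, pow_two]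
  have h2' : (P i i)^2 ≤ ∑ l, (P i l)^2 :=
    Finset.single_le_sum (f := fun l => (P i l)^2) (fun l _ => sq_nonneg _) (mem_univ i)
  have h2 : (P i i)^2 ≤ P i i := le_of_le_of_eq h2' h1.symm
  have hPii : P i i = ∑ j, (Q i j)^2 := by
    simp [hPdef, Matrix.mul_apply, pow_two]
  have h0 : 0 ≤ P i i := hPii ▸ Finset.sum_nonneg fun _ _ => sq_nonneg _
  nlinarith [h2, h0, hPii]


lemma exists_Q {k r : ℕ} (hkr : k ≤ r) (W : Matrix (Fin k) (Fin r) ℝ) :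
    ∃ Q : Matrix (Fin r) (Fin (r - k)) ℝ, Qᵀ * Q = 1 ∧ W * Q = 0 := by
  classical
  let e : EuclideanSpace ℝ (Fin r) ≃ₗ[ℝ] (Fin r → ℝ) := WithLp.linearEquiv 2 ℝ (Fin r → ℝ)
  let G : EuclideanSpace ℝ (Fin r) →ₗ[ℝ] (Fin k → ℝ) := W.mulVecLin ∘ₗ e.toLinearMap
  have hrk : r - k ≤ Module.finrank ℝ (LinearMap.ker G) := by
    have h1 := LinearMap.finrank_range_add_finrank_ker G
    have h2 : Module.finrank ℝ (LinearMap.range G) ≤ k := by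
      have := Submodule.finrank_le (LinearMap.range G)
      simpa using this
    have h3 : Module.finrank ℝ (EuclideanSpace ℝ (Fin r)) = r := finrank_euclideanSpace_fin
    omega
  let ob := stdOrthonormalBasis ℝ (LinearMap.ker G)
  let q : Fin (r - k) → EuclideanSpace ℝ (Fin r) :=
    fun j => (ob (Fin.castLE hrk j) : EuclideanSpace ℝ (Fin r))
  have hortho : Orthonormal ℝ q := by
    have h := (ob.orthonormal.comp (Fin.castLE hrk) (Fin.castLE_injective hrk))
    rw [orthonormal_iff_ite] at h ⊢
    intro i j
    exact h i j
  have hker : ∀ j, q j ∈ LinearMap.ker G := fun j => (ob (Fin.castLE hrk j)).2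
  refine ⟨Matrix.of (fun i j => q j i), ?_, ?_⟩
  · ext j j'
    have h := (orthonormal_iff_ite.mp hortho) j j'
    simp only [PiLp.inner_apply, RCLike.inner_apply, conj_trivial] at h
    simp only [Matrix.mul_apply, Matrix.one_apply, Matrix.transpose_apply, Matrix.of_apply]
    exact (Finset.sum_congr rfl fun _ _ => mul_comm _ _).trans h
  · ext x j
    have h0 : W *ᵥ (e (q j)) = 0 := LinearMap.mem_ker.mp (hker j)
    have := congrFun h0 x
    simp only [Matrix.mul_apply, Matrix.zero_apply, Matrix.of_apply]
    simpa [Matrix.mulVec, dotProduct, e, WithLp.linearEquiv] using this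


lemma card_filter_le {r k : ℕ} (hk : k ≤ r) :
    (Finset.filter (fun i : Fin r => k ≤ (i:ℕ)) Finset.univ).card = r - k := by
  have : Finset.filter (fun i : Fin r => k ≤ (i:ℕ)) Finset.univ =
      Finset.map ⟨fun j : Fin (r-k) => (⟨k + j, by omega⟩ : Fin r),
        by intro a b hab; simp only [Fin.mk.injEq] at hab; exact Fin.ext (by omega)⟩
        Finset.univ := by
    ext i
    simp only [Finset.mem_filter, Finset.mem_univ, true_and, Finset.mem_map,
      Function.Embedding.coeFn_mk]
    constructor
    · intro hi
      exact ⟨⟨(i:ℕ) - k, by omega⟩, Fin.ext (by show k + ((i:ℕ) - k) = (i:ℕ); omega)⟩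
    · rintro ⟨j, rfl⟩; show k ≤ k + (j:ℕ); omega
  rw [this, Finset.card_map, Finset.card_univ, Fintype.card_fin]

lemma threshold {r k : ℕ} (hk : k < r) (d : Fin r → ℝ) (hd0 : ∀ i, 0 ≤ d i) (hdA : Antitone d)
    (q : Fin r → ℝ) (hq0 : ∀ i, 0 ≤ q i) (hq1 : ∀ i, q i ≤ 1)
    (hqs : ∑ i, q i = ((r - k : ℕ) : ℝ)) :
    ∑ i ∈ Finset.filter (fun i : Fin r => k ≤ (i:ℕ)) Finset.univ, d i ≤ ∑ i, d i * q i := by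
  classical
  set τ := d ⟨k, hk⟩ with hτ
  set S := Finset.filter (fun i : Fin r => k ≤ (i:ℕ)) Finset.univ with hS
  have hsplit : ∑ i, d i * q i =
      ∑ i ∈ S, d i * q i + ∑ i ∈ Finset.filter (fun i : Fin r => ¬ k ≤ (i:ℕ)) Finset.univ, d i * q i := by
    rw [hS, Finset.sum_filter_add_sum_filter_not]
  have h1 : ∑ i ∈ S, d i * (1 - q i) ≤ τ * ∑ i ∈ S, (1 - q i) := by
    rw [Finset.mul_sum]
    apply Finset.sum_le_sum
    intro i hi
    have hik : k ≤ (i : ℕ) := (Finset.mem_filter.mp hi).2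
    have : d i ≤ τ := hdA (by exact Fin.mk_le_of_le_val hik)
    have h1q : 0 ≤ 1 - q i := by linarith [hq1 i]
    nlinarith
  have h2 : τ * ∑ i ∈ Finset.filter (fun i : Fin r => ¬ k ≤ (i:ℕ)) Finset.univ, q i ≤
      ∑ i ∈ Finset.filter (fun i : Fin r => ¬ k ≤ (i:ℕ)) Finset.univ, d i * q i := by
    rw [Finset.mul_sum]
    apply Finset.sum_le_sum
    intro i hi
    have hik : (i : ℕ) < k := by
      have := (Finset.mem_filter.mp hi).2; omega
    have : τ ≤ d i := hdA (by rw [Fin.le_def]; simp; omega)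
    nlinarith [hq0 i]
  have hcard : (S.card : ℝ) = ((r - k : ℕ) : ℝ) := by
    rw [hS, card_filter_le hk.le]
  have hqsplit : ∑ i ∈ S, q i + ∑ i ∈ Finset.filter (fun i : Fin r => ¬ k ≤ (i:ℕ)) Finset.univ, q i
      = ((r - k : ℕ) : ℝ) := by
    rw [Finset.sum_filter_add_sum_filter_not, hqs]
  have hSsum : ∑ i ∈ S, (1 - q i) = S.card - ∑ i ∈ S, q i := by
    rw [Finset.sum_sub_distrib, Finset.sum_const, nsmul_eq_mul, mul_one]
  have hτ0 : 0 ≤ τ := hd0 _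
  have key : ∑ i ∈ S, d i * (1 - q i) ≤
      ∑ i ∈ Finset.filter (fun i : Fin r => ¬ k ≤ (i:ℕ)) Finset.univ, d i * q i := by
    calc ∑ i ∈ S, d i * (1 - q i) ≤ τ * ∑ i ∈ S, (1 - q i) := h1
    _ = τ * ∑ i ∈ Finset.filter (fun i : Fin r => ¬ k ≤ (i:ℕ)) Finset.univ, q i := by
        rw [hSsum]; congr 1; rw [hcard] at *; linarith
    _ ≤ _ := h2
  have hexp : ∑ i ∈ S, d i * (1 - q i) = ∑ i ∈ S, d i - ∑ i ∈ S, d i * q i := by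
    rw [← Finset.sum_sub_distrib]; exact Finset.sum_congr rfl fun i _ => by ring
  rw [hexp] at key
  rw [hsplit]; linarith


lemma abel_key (p : ℕ) (A w : ℕ → ℝ) (hA : Monotone A) (hA0 : 0 ≤ A 0)
    (hW : ∀ k, 0 ≤ ∑ i ∈ Finset.Ico k p, w i) :
    0 ≤ ∑ i ∈ Finset.range p, A i * w i := by
  induction p generalizing A w with
  | zero => simp
  | succ p ih =>
    have h0 : 0 ≤ A 0 * ∑ i ∈ Finset.range (p+1), w i := by
      apply mul_nonneg hA0
      have := hW 0
      rwa [← Finset.range_eq_Ico] at this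
    have h1 : 0 ≤ ∑ i ∈ Finset.range p, (A (i+1) - A 0) * w (i+1) := by
      apply ih (fun i => A (i+1) - A 0) (fun i => w (i+1))
      · intro i j hij
        have := hA (show i + 1 ≤ j + 1 by omega)
        simpa using this
      · have := hA (Nat.zero_le 1); simpa using this
      · intro k
        have h := hW (k+1)
        have heq : ∑ i ∈ Finset.Ico k p, w (i+1) = ∑ i ∈ Finset.Ico (k+1) (p+1), w i := by
          rw [← Finset.sum_Ico_add' w k p 1]
        rw [heq]; exact h
    have hsplit : ∑ i ∈ Finset.range (p+1), A i * w i =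
        A 0 * ∑ i ∈ Finset.range (p+1), w i +
          ∑ i ∈ Finset.range (p+1), (A i - A 0) * w i := by
      rw [Finset.mul_sum, ← Finset.sum_add_distrib]
      exact Finset.sum_congr rfl fun i _ => by ring
    have hshift : ∑ i ∈ Finset.range (p+1), (A i - A 0) * w i =
        ∑ i ∈ Finset.range p, (A (i+1) - A 0) * w (i+1) := by
      rw [Finset.sum_range_succ' (fun i => (A i - A 0) * w i) p]
      simp
    rw [hsplit, hshift]
    linarith


lemma fin_filter_sum {N : ℕ} (k : ℕ) (f : Fin N → ℝ) :
    ∑ i ∈ Finset.filter (fun i : Fin N => k ≤ (i:ℕ)) Finset.univ, f i =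
      ∑ i ∈ Finset.Ico k N, (if h : i < N then f ⟨i, h⟩ else 0) := by
  rw [Finset.sum_filter]
  rw [show (∑ i : Fin N, if k ≤ (i:ℕ) then f i else 0) =
      ∑ i : Fin N, (fun nn : ℕ => if h : nn < N then (if k ≤ nn then f ⟨nn,h⟩ else 0) else 0) ↑i
    from Finset.sum_congr rfl fun i _ => by simp [i.isLt]]
  rw [Fin.sum_univ_eq_sum_range (fun nn : ℕ => if h : nn < N then (if k ≤ nn then f ⟨nn,h⟩ else 0) else 0) N]
  have hIco : Finset.Ico k N = Finset.filter (fun i => k ≤ i) (Finset.range N) := by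
    ext i; simp [Finset.mem_Ico]; omega
  rw [hIco, Finset.sum_filter]
  apply Finset.sum_congr rfl
  intro i hi
  have h : i < N := Finset.mem_range.mp hi
  simp [h]

lemma tail_bound {m n r p k : ℕ} (hk : k < r) (hrp : r ≤ p)
    (L : Matrix (Fin m) (Fin r) ℝ) (R : Matrix (Fin n) (Fin r) ℝ) (d : Fin r → ℝ)
    (hL : Lᵀ * L = 1) (hR : Rᵀ * R = 1) (hd0 : ∀ i, 0 ≤ d i) (hdA : Antitone d)
    (B : Matrix (Fin m) (Fin p) ℝ) (C : Matrix (Fin n) (Fin p) ℝ)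
    (hBC : B * Cᵀ = L * Matrix.diagonal d * Rᵀ) :
    ∑ i ∈ Finset.filter (fun i : Fin r => k ≤ (i:ℕ)) Finset.univ, d i ≤
      ∑ j ∈ Finset.filter (fun j : Fin p => k ≤ (j:ℕ)) Finset.univ,
        ((∑ x, B x j ^ 2) + ∑ y, C y j ^ 2) / 2 := by
  classical
  have hkp : k ≤ p := le_trans hk.le hrp
  set W : Matrix (Fin k) (Fin r) ℝ :=
    Matrix.of (fun jk i => ∑ x, B x (Fin.castLE hkp jk) * L x i) with hWdef
  obtain ⟨Q, hQ1, hQ2⟩ := exists_Q hk.le W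
  set U := L * Q with hUdef
  set V := R * Q with hVdef
  have hU : Uᵀ * U = 1 := by
    rw [hUdef, Matrix.transpose_mul, Matrix.mul_assoc, ← Matrix.mul_assoc Lᵀ L Q, hL,
      Matrix.one_mul, hQ1]
  have hV : Vᵀ * V = 1 := by
    rw [hVdef, Matrix.transpose_mul, Matrix.mul_assoc, ← Matrix.mul_assoc Rᵀ R Q, hR,
      Matrix.one_mul, hQ1]
  set u : Fin p → Fin (r-k) → ℝ := fun j => Uᵀ *ᵥ (fun x => B x j) with hu
  set v : Fin p → Fin (r-k) → ℝ := fun j => Vᵀ *ᵥ (fun y => C y j) with hv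
  have hmid : Qᵀ * Matrix.diagonal d * Q = (Uᵀ * B) * (Cᵀ * V) := by
    have hdiag : Matrix.diagonal d = Lᵀ * (B * Cᵀ) * R := by
      rw [hBC, show Lᵀ * (L * Matrix.diagonal d * Rᵀ) * R
          = (Lᵀ * L) * Matrix.diagonal d * (Rᵀ * R) by simp only [Matrix.mul_assoc], hL, hR,
        Matrix.one_mul, Matrix.mul_one]
    rw [hdiag, hUdef, hVdef, Matrix.transpose_mul]
    simp only [Matrix.mul_assoc]
  have htrace := congrArg Matrix.trace hmid
  have hlhs : (Qᵀ * Matrix.diagonal d * Q).trace = ∑ i, d i * (∑ s, (Q i s)^2) := by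
    have hent : ∀ s, (Qᵀ * Matrix.diagonal d * Q) s s = ∑ i, Q i s * d i * Q i s := by
      intro s
      rw [Matrix.mul_apply]
      exact Finset.sum_congr rfl fun i _ => by
        rw [Matrix.mul_diagonal, Matrix.transpose_apply]
    calc (Qᵀ * Matrix.diagonal d * Q).trace
        = ∑ s, ∑ i, Q i s * d i * Q i s := Finset.sum_congr rfl fun s _ => hent s
      _ = ∑ i, ∑ s, Q i s * d i * Q i s := Finset.sum_comm
      _ = ∑ i, d i * (∑ s, (Q i s)^2) := by
          apply Finset.sum_congr rfl; intro i _
          rw [Finset.mul_sum]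
          exact Finset.sum_congr rfl fun s _ => by ring
  have hrhs : ((Uᵀ * B) * (Cᵀ * V)).trace = ∑ j, ∑ s, u j s * v j s := by
    calc ((Uᵀ * B) * (Cᵀ * V)).trace
        = ∑ s, ∑ j, (Uᵀ * B) s j * (Cᵀ * V) j s :=
          Finset.sum_congr rfl fun s _ => Matrix.mul_apply
      _ = ∑ j, ∑ s, (Uᵀ * B) s j * (Cᵀ * V) j s := Finset.sum_comm
      _ = ∑ j, ∑ s, u j s * v j s := by
          apply Finset.sum_congr rfl; intro j _
          apply Finset.sum_congr rfl; intro s _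
          congr 1
          · simp [hv, Matrix.mulVec, dotProduct, Matrix.mul_apply, Matrix.transpose_apply,
              mul_comm]
  have hqsum : ∑ i, (∑ s, (Q i s)^2) = ((r - k : ℕ) : ℝ) := by
    have h := congrArg Matrix.trace hQ1
    have h1 : (Qᵀ * Q).trace = ∑ s, ∑ i, Q i s * Q i s :=
      Finset.sum_congr rfl fun s _ => Matrix.mul_apply
    rw [h1, Matrix.trace_one, Fintype.card_fin] at h
    rw [← h, Finset.sum_comm]
    exact Finset.sum_congr rfl fun i _ => Finset.sum_congr rfl fun s _ => by ring
  have hq1 : ∀ i, (∑ s, (Q i s)^2) ≤ 1 := sum_sq_row_le_one Q hQ1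
  have hq0 : ∀ i : Fin r, 0 ≤ ∑ s, (Q i s)^2 :=
    fun i => Finset.sum_nonneg fun _ _ => sq_nonneg _
  have hthresh := threshold hk d hd0 hdA (fun i => ∑ s, (Q i s)^2) hq0 hq1 hqsum
  have hzero : ∀ j : Fin p, (j:ℕ) < k → u j = 0 := by
    intro j hj
    funext s
    have h0 := congrFun (congrFun hQ2 ⟨(j:ℕ), hj⟩) s
    simp only [Matrix.mul_apply, Matrix.zero_apply, hWdef, Matrix.of_apply] at h0
    have hcast : Fin.castLE hkp (⟨(j:ℕ), hj⟩ : Fin k) = j := Fin.ext rfl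
    rw [hcast] at h0
    show (Uᵀ *ᵥ fun x => B x j) s = 0
    rw [hUdef]
    simp only [Matrix.mulVec, dotProduct, Matrix.transpose_apply, Matrix.mul_apply]
    calc ∑ x, (∑ i, L x i * Q i s) * B x j
        = ∑ x, ∑ i, (B x j * L x i) * Q i s := by
          apply Finset.sum_congr rfl; intro x _
          rw [Finset.sum_mul]
          exact Finset.sum_congr rfl fun i _ => by ring
      _ = ∑ i, ∑ x, (B x j * L x i) * Q i s := Finset.sum_comm
      _ = ∑ i, (∑ x, B x j * L x i) * Q i s := by
          apply Finset.sum_congr rfl; intro i _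
          rw [Finset.sum_mul]
      _ = 0 := h0
  have hcol : ∀ j : Fin p, ∑ s, u j s * v j s ≤ ((∑ x, B x j ^2) + ∑ y, C y j ^2)/2 := by
    intro j
    have hb := sum_sq_transpose_mulVec_le U hU (fun x => B x j)
    have hc := sum_sq_transpose_mulVec_le V hV (fun y => C y j)
    have hAM : ∑ s, u j s * v j s ≤ ((∑ s, (u j s)^2) + ∑ s, (v j s)^2)/2 := by
      have h1 : ∑ s, u j s * v j s ≤ ∑ s, ((u j s)^2 + (v j s)^2)/2 :=
        Finset.sum_le_sum fun s _ => by nlinarith [sq_nonneg (u j s - v j s)]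
      calc ∑ s, u j s * v j s ≤ ∑ s, ((u j s)^2 + (v j s)^2)/2 := h1
        _ = ((∑ s, (u j s)^2) + ∑ s, (v j s)^2)/2 := by
            rw [← Finset.sum_div, Finset.sum_add_distrib]
    have hub : ∑ s, (u j s)^2 ≤ ∑ x, B x j ^2 := hb
    have hvb : ∑ s, (v j s)^2 ≤ ∑ y, C y j ^2 := hc
    linarith
  calc ∑ i ∈ Finset.filter (fun i : Fin r => k ≤ (i:ℕ)) Finset.univ, d i
      ≤ ∑ i, d i * (∑ s, (Q i s)^2) := hthresh
    _ = ∑ j, ∑ s, u j s * v j s := by rw [← hlhs, htrace, hrhs]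
    _ = ∑ j ∈ Finset.filter (fun j : Fin p => k ≤ (j:ℕ)) Finset.univ, ∑ s, u j s * v j s := by
        symm
        apply Finset.sum_subset (Finset.filter_subset _ _)
        intro j _ hj
        have hjk : (j:ℕ) < k := by
          simp only [Finset.mem_filter, Finset.mem_univ, true_and] at hj; omega
        simp [hzero j hjk]
    _ ≤ _ := Finset.sum_le_sum fun j _ => hcol j


/-- For a rank-r matrix X with compact SVD X = L Σ Rᵀ and nonnegative
non-decreasing weights a ∈ ℝ^p (p ≥ r), every factorization X = B Cᵀ with p
columns satisfies Σᵢ aᵢ(‖Bᵢ‖²+‖Cᵢ‖²)/2 ≥ Σᵢ aᵢ σᵢ(X), with equality for the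
zero-padded B = L√Σ, C = R√Σ. -/
theorem weighted_nuclear_norm_eq_min_factorization {m n r p : ℕ} (hrp : r ≤ p)
    (X : Matrix (Fin m) (Fin n) ℝ)
    (L : Matrix (Fin m) (Fin r) ℝ) (R : Matrix (Fin n) (Fin r) ℝ) (d : Fin r → ℝ)
    (hL : Lᵀ * L = 1) (hR : Rᵀ * R = 1) (hd : ∀ i, 0 < d i) (hdA : Antitone d)
    (hX : X = L * Matrix.diagonal d * Rᵀ)
    (a : Fin p → ℝ) (ha0 : ∀ i, 0 ≤ a i) (haM : Monotone a) :
    (∀ (B : Matrix (Fin m) (Fin p) ℝ) (C : Matrix (Fin n) (Fin p) ℝ),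
        B * Cᵀ = X →
        ∑ i : Fin r, a (Fin.castLE hrp i) * d i ≤
          ∑ i : Fin p, a i * ((∑ j, B j i ^ 2) + ∑ j, C j i ^ 2) / 2) ∧
    ((Matrix.of fun j (i : Fin p) =>
          if h : (i : ℕ) < r then L j ⟨i, h⟩ * Real.sqrt (d ⟨i, h⟩) else 0) *
        (Matrix.of fun j (i : Fin p) =>
          if h : (i : ℕ) < r then R j ⟨i, h⟩ * Real.sqrt (d ⟨i, h⟩) else 0)ᵀ = X ∧
      ∑ i : Fin p, a i *
          ((∑ j, (Matrix.of fun j (i : Fin p) =>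
              if h : (i : ℕ) < r then L j ⟨i, h⟩ * Real.sqrt (d ⟨i, h⟩) else 0) j i ^ 2) +
            ∑ j, (Matrix.of fun j (i : Fin p) =>
              if h : (i : ℕ) < r then R j ⟨i, h⟩ * Real.sqrt (d ⟨i, h⟩) else 0) j i ^ 2) / 2 =
        ∑ i : Fin r, a (Fin.castLE hrp i) * d i) := by
  classical
  have hd0 : ∀ i, 0 ≤ d i := fun i => (hd i).le
  have hLcol : ∀ j : Fin r, ∑ x, (L x j)^2 = 1 := by
    intro j
    have h := congrFun (congrFun hL j) j
    simp only [Matrix.mul_apply, Matrix.transpose_apply, Matrix.one_apply_eq] at h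
    rw [← h]
    exact Finset.sum_congr rfl fun x _ => by ring
  have hRcol : ∀ j : Fin r, ∑ y, (R y j)^2 = 1 := by
    intro j
    have h := congrFun (congrFun hR j) j
    simp only [Matrix.mul_apply, Matrix.transpose_apply, Matrix.one_apply_eq] at h
    rw [← h]
    exact Finset.sum_congr rfl fun y _ => by ring
  constructor
  · -- the inequality
    intro B C hBC
    by_cases hr0 : r = 0
    · subst hr0
      rw [Finset.univ_eq_empty, Finset.sum_empty]
      apply Finset.sum_nonneg
      intro i _
      have h1 : 0 ≤ ∑ j, B j i ^2 := Finset.sum_nonneg fun _ _ => sq_nonneg _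
      have h2 : 0 ≤ ∑ j, C j i ^2 := Finset.sum_nonneg fun _ _ => sq_nonneg _
      have := ha0 i
      positivity
    · have hr : 0 < r := Nat.pos_of_ne_zero hr0
      have hp : 0 < p := lt_of_lt_of_le hr hrp
      set t : Fin p → ℝ := fun i => ((∑ x, B x i ^2) + ∑ y, C y i ^2)/2 with ht
      set A : ℕ → ℝ := fun i => if h : i < p then a ⟨i,h⟩ else a ⟨p-1, by omega⟩ with hA
      set w : ℕ → ℝ := fun i =>
        (if h : i < p then t ⟨i,h⟩ else 0) - (if h : i < r then d ⟨i,h⟩ else 0) with hw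
      have ht0 : ∀ i, 0 ≤ t i := by
        intro i
        have h1 : 0 ≤ ∑ x, B x i^2 := Finset.sum_nonneg fun _ _ => sq_nonneg _
        have h2 : 0 ≤ ∑ y, C y i^2 := Finset.sum_nonneg fun _ _ => sq_nonneg _
        rw [ht]; dsimp only; linarith
      have hAmono : Monotone A := by
        intro i j hij
        rw [hA]; dsimp only
        split_ifs with h1 h2 h2
        · exact haM (Fin.mk_le_mk.mpr hij)
        · exact haM (Fin.mk_le_mk.mpr (by omega))
        · exact absurd (lt_of_le_of_lt hij h2) h1
        · exact le_refl _
      have hA0 : 0 ≤ A 0 := by rw [hA]; dsimp only; rw [dif_pos hp]; exact ha0 _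
      have hX' : B * Cᵀ = L * Matrix.diagonal d * Rᵀ := by rw [hBC, hX]
      have hWc : ∀ k, 0 ≤ ∑ i ∈ Finset.Ico k p, w i := by
        intro k
        have hsub : ∑ i ∈ Finset.Ico k p, w i =
            (∑ i ∈ Finset.Ico k p, (if h : i < p then t ⟨i,h⟩ else 0))
              - ∑ i ∈ Finset.Ico k p, (if h : i < r then d ⟨i,h⟩ else 0) := by
          rw [← Finset.sum_sub_distrib]
        have htnn : 0 ≤ ∑ i ∈ Finset.Ico k p, (if h : i < p then t ⟨i,h⟩ else 0) := by
          apply Finset.sum_nonneg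
          intro i _
          split_ifs with h
          · exact ht0 _
          · exact le_refl _
        by_cases hkr : k < r
        · have htb := tail_bound hkr hrp L R d hL hR hd0 hdA B C hX'
          rw [fin_filter_sum k d, fin_filter_sum k
            (fun j : Fin p => ((∑ x, B x j ^ 2) + ∑ y, C y j ^ 2) / 2)] at htb
          have hdpart : ∑ i ∈ Finset.Ico k p, (if h : i < r then d ⟨i,h⟩ else 0)
              = ∑ i ∈ Finset.Ico k r, (if h : i < r then d ⟨i,h⟩ else 0) := by
            rw [← Finset.sum_Ico_consecutive
              (f := fun i => if h : i < r then d ⟨i,h⟩ else 0) (le_of_lt hkr) hrp]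
            have hz : ∑ i ∈ Finset.Ico r p, (if h : i < r then d ⟨i,h⟩ else 0) = 0 := by
              apply Finset.sum_eq_zero; intro i hi
              rw [dif_neg]; have := (Finset.mem_Ico.mp hi).1; omega
            rw [hz, add_zero]
          rw [hsub, hdpart]
          have : (∑ i ∈ Finset.Ico k p,
              (if h : i < p then (fun j : Fin p => ((∑ x, B x j ^ 2) + ∑ y, C y j ^ 2) / 2) ⟨i,h⟩
                else 0)) = ∑ i ∈ Finset.Ico k p, (if h : i < p then t ⟨i,h⟩ else 0) := by
            apply Finset.sum_congr rfl; intro i _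
            split_ifs with h
            · rw [ht]
            · rfl
          rw [this] at htb
          linarith
        · have hdz : ∑ i ∈ Finset.Ico k p, (if h : i < r then d ⟨i,h⟩ else 0) = 0 := by
            apply Finset.sum_eq_zero; intro i hi
            rw [dif_neg]; have := (Finset.mem_Ico.mp hi).1; omega
          rw [hsub, hdz]; linarith
      have hkey := abel_key p A w hAmono hA0 hWc
      have hsplit : ∑ i ∈ Finset.range p, A i * w i =
          (∑ i ∈ Finset.range p, A i * (if h : i < p then t ⟨i,h⟩ else 0))
            - ∑ i ∈ Finset.range p, A i * (if h : i < r then d ⟨i,h⟩ else 0) := by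
        rw [← Finset.sum_sub_distrib]
        exact Finset.sum_congr rfl fun i _ => by rw [hw]; ring
      have h1 : ∑ i ∈ Finset.range p, A i * (if h : i < p then t ⟨i,h⟩ else 0)
          = ∑ i : Fin p, a i * t i := by
        rw [← Fin.sum_univ_eq_sum_range (fun i => A i * (if h : i < p then t ⟨i,h⟩ else 0)) p]
        apply Finset.sum_congr rfl
        intro i _
        rw [hA]; dsimp only
        rw [dif_pos i.isLt, dif_pos i.isLt]
      have h2 : ∑ i ∈ Finset.range p, A i * (if h : i < r then d ⟨i,h⟩ else 0)
          = ∑ i : Fin r, a (Fin.castLE hrp i) * d i := by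
        have hzero : ∀ x ∈ Finset.range p, x ∉ Finset.range r →
            A x * (if h : x < r then d ⟨x,h⟩ else 0) = 0 := by
          intro x _ hx
          rw [dif_neg (by simpa using hx), mul_zero]
        rw [← Finset.sum_subset (Finset.range_subset_range.mpr hrp) hzero]
        rw [← Fin.sum_univ_eq_sum_range (fun i => A i * (if h : i < r then d ⟨i,h⟩ else 0)) r]
        apply Finset.sum_congr rfl
        intro i _
        rw [hA]; dsimp only
        rw [dif_pos (lt_of_lt_of_le i.isLt hrp), dif_pos i.isLt]
        rfl
      have hgoal2 : ∑ i : Fin p, a i * ((∑ j, B j i ^ 2) + ∑ j, C j i ^ 2) / 2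
          = ∑ i : Fin p, a i * t i := by
        apply Finset.sum_congr rfl; intro i _; rw [ht]; ring
      rw [hgoal2]
      rw [hsplit, h1, h2] at hkey
      linarith
  · constructor
    · -- product equals X
      ext x y
      rw [Matrix.mul_apply, hX]
      have hXentry : (L * Matrix.diagonal d * Rᵀ) x y = ∑ i, L x i * d i * R y i := by
        rw [Matrix.mul_apply]
        exact Finset.sum_congr rfl fun i _ => by
          rw [Matrix.mul_diagonal, Matrix.transpose_apply]
      rw [hXentry]
      have hterm : ∀ i : Fin p,
          (Matrix.of fun j (i : Fin p) =>
              if h : (i : ℕ) < r then L j ⟨i, h⟩ * Real.sqrt (d ⟨i, h⟩) else 0) x i *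
            (Matrix.of fun j (i : Fin p) =>
              if h : (i : ℕ) < r then R j ⟨i, h⟩ * Real.sqrt (d ⟨i, h⟩) else 0)ᵀ i y
          = (fun nn : ℕ => if h : nn < r then L x ⟨nn,h⟩ * R y ⟨nn,h⟩ * d ⟨nn,h⟩ else 0) ↑i := by
        intro i
        simp only [Matrix.of_apply, Matrix.transpose_apply]
        by_cases h : (i:ℕ) < r
        · rw [dif_pos h, dif_pos h, dif_pos h,
            show (L x ⟨i,h⟩ * Real.sqrt (d ⟨i,h⟩)) * (R y ⟨i,h⟩ * Real.sqrt (d ⟨i,h⟩))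
              = L x ⟨i,h⟩ * R y ⟨i,h⟩ * (Real.sqrt (d ⟨i,h⟩) * Real.sqrt (d ⟨i,h⟩)) by ring,
            Real.mul_self_sqrt (hd0 _)]
        · rw [dif_neg h, dif_neg h, dif_neg h, zero_mul]
      rw [Finset.sum_congr rfl fun i _ => hterm i]
      rw [Fin.sum_univ_eq_sum_range
        (fun nn : ℕ => if h : nn < r then L x ⟨nn,h⟩ * R y ⟨nn,h⟩ * d ⟨nn,h⟩ else 0) p]
      have hzero : ∀ x' ∈ Finset.range p, x' ∉ Finset.range r →
          (if h : x' < r then L x ⟨x',h⟩ * R y ⟨x',h⟩ * d ⟨x',h⟩ else 0) = 0 := by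
        intro x' _ hx'
        rw [dif_neg (by simpa using hx')]
      rw [← Finset.sum_subset (Finset.range_subset_range.mpr hrp) hzero]
      rw [← Fin.sum_univ_eq_sum_range
        (fun nn : ℕ => if h : nn < r then L x ⟨nn,h⟩ * R y ⟨nn,h⟩ * d ⟨nn,h⟩ else 0) r]
      apply Finset.sum_congr rfl
      intro i _
      rw [dif_pos i.isLt]
      simp only [Fin.eta]
      ring
    · -- the value of the factorization
      have hterm : ∀ i : Fin p,
          a i * ((∑ j, (Matrix.of fun j (i : Fin p) =>
              if h : (i : ℕ) < r then L j ⟨i, h⟩ * Real.sqrt (d ⟨i, h⟩) else 0) j i ^ 2) +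
            ∑ j, (Matrix.of fun j (i : Fin p) =>
              if h : (i : ℕ) < r then R j ⟨i, h⟩ * Real.sqrt (d ⟨i, h⟩) else 0) j i ^ 2) / 2
          = (fun nn : ℕ => if h : nn < r then a ⟨nn, lt_of_lt_of_le h hrp⟩ * d ⟨nn,h⟩ else 0) ↑i := by
        intro i
        simp only [Matrix.of_apply]
        by_cases h : (i:ℕ) < r
        · have hB2 : ∑ j, (if h' : (i:ℕ) < r then L j ⟨i, h'⟩ * Real.sqrt (d ⟨i, h'⟩) else 0)^2
              = d ⟨i,h⟩ := by
            simp only [dif_pos h]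
            have : ∀ j, (L j ⟨i,h⟩ * Real.sqrt (d ⟨i,h⟩))^2
                = (L j ⟨i,h⟩)^2 * d ⟨i,h⟩ := by
              intro j
              rw [mul_pow, Real.sq_sqrt (hd0 _)]
            rw [Finset.sum_congr rfl fun j _ => this j, ← Finset.sum_mul, hLcol, one_mul]
          have hC2 : ∑ j, (if h' : (i:ℕ) < r then R j ⟨i, h'⟩ * Real.sqrt (d ⟨i, h'⟩) else 0)^2
              = d ⟨i,h⟩ := by
            simp only [dif_pos h]
            have : ∀ j, (R j ⟨i,h⟩ * Real.sqrt (d ⟨i,h⟩))^2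
                = (R j ⟨i,h⟩)^2 * d ⟨i,h⟩ := by
              intro j
              rw [mul_pow, Real.sq_sqrt (hd0 _)]
            rw [Finset.sum_congr rfl fun j _ => this j, ← Finset.sum_mul, hRcol, one_mul]
          rw [hB2, hC2, dif_pos h]
          have : (⟨(i:ℕ), lt_of_lt_of_le h hrp⟩ : Fin p) = i := Fin.eta i _
          rw [this]
          ring
        · simp only [dif_neg h]
          simp
      rw [Finset.sum_congr rfl fun i _ => hterm i]
      rw [Fin.sum_univ_eq_sum_range
        (fun nn : ℕ => if h : nn < r then a ⟨nn, lt_of_lt_of_le h hrp⟩ * d ⟨nn,h⟩ else 0) p]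
      have hzero : ∀ x' ∈ Finset.range p, x' ∉ Finset.range r →
          (if h : x' < r then a ⟨x', lt_of_lt_of_le h hrp⟩ * d ⟨x',h⟩ else 0) = 0 := by
        intro x' _ hx'
        rw [dif_neg (by simpa using hx')]
      rw [← Finset.sum_subset (Finset.range_subset_range.mpr hrp) hzero]
      rw [← Fin.sum_univ_eq_sum_range
        (fun nn : ℕ => if h : nn < r then a ⟨nn, lt_of_lt_of_le h hrp⟩ * d ⟨nn,h⟩ else 0) r]
      apply Finset.sum_congr rfl
      intro i _
      rw [dif_pos i.isLt]
      congr 1
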